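/- Let u, v : [0,∞) → ℝ^d (viewed as d×d matrix-valued via θ-derivatives) satisfy the linear system u' = v + H(s)u + α(s)e, v' = -2F(s)u - H(s)ᵀv with u(0) = v(0) = 0, where H(s), F(s) are continuous d×d matrix functions, e is a fixed unit vector, and α ≥ 0 with α > 0 on (0,∞). Packaging the d columns (one per unit vector e₁,…,e_d) into a 2d×d matrix ξ = (u; v), this satisfies ξ' = A(s)ξ + α(s)(I_d; 0) with A(s) = [[H(s), I_d], [-2F(s), -H(s)ᵀ]], and hence det u(s) > ((1/2)∫₀ˢ α)^d > 0 for small s > 0. -/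

import Mathlib

set_option maxHeartbeats 1000000
set_option linter.unnecessarySeqFocus false


open Matrix

@[simp] theorem sumElim_inl_apply_matrix {m n R : Type*} (f g : Matrix m n R) (i : m) (j : n) :
    (Sum.elim f g : m ⊕ m → n → R) (Sum.inl i) j = f i j := rfl

@[simp] theorem sumElim_inr_apply_matrix {m n R : Type*} (f g : Matrix m n R) (i : m) (j : n) :
    (Sum.elim f g : m ⊕ m → n → R) (Sum.inr i) j = g i j := rfl

theorem stmt_12 (d : ℕ) (hd : 0 < d)
    (H F : ℝ → Matrix (Fin d) (Fin d) ℝ)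
    (hH : ∀ i j, Continuous fun s => H s i j)
    (hF : ∀ i j, Continuous fun s => F s i j)
    (α : ℝ → ℝ) (hα : Continuous α) (hαnn : ∀ s, 0 ≤ α s)
    (hαpos : ∀ s > (0:ℝ), 0 < α s)
    (u v : ℝ → Matrix (Fin d) (Fin d) ℝ) (hu0 : u 0 = 0) (hv0 : v 0 = 0)
    (hu : ∀ (s : ℝ) (i j : Fin d), HasDerivAt (fun s => u s i j)
      ((v s + H s * u s + α s • (1 : Matrix (Fin d) (Fin d) ℝ)) i j) s)
    (hv : ∀ (s : ℝ) (i j : Fin d), HasDerivAt (fun s => v s i j)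
      ((-(2 • (F s * u s)) - (H s)ᵀ * v s) i j) s) :
    (∀ (s : ℝ) (i : Fin d ⊕ Fin d) (j : Fin d),
      HasDerivAt (fun s => Matrix.of (Sum.elim (u s) (v s)) i j)
        ((Matrix.fromBlocks (H s) 1 (-(2 • F s)) (-(H s)ᵀ) *
            Matrix.of (Sum.elim (u s) (v s))) i j
          + α s * Matrix.of (Sum.elim (1 : Matrix (Fin d) (Fin d) ℝ)
              (0 : Matrix (Fin d) (Fin d) ℝ)) i j) s) ∧
    ∃ ε₀ > (0:ℝ), ∀ s ∈ Set.Ioo (0:ℝ) ε₀,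
      (0:ℝ) < ((1/2) * ∫ t in (0:ℝ)..s, α t) ^ d ∧
      ((1/2) * ∫ t in (0:ℝ)..s, α t) ^ d < (u s).det := by
  refine ⟨?_, ?_⟩
  · intro s i j
    cases i with
    | inl i =>
      convert hu s i j using 1
      · rfl
      simp only [Matrix.of_apply]
      simp [Matrix.mul_apply, Fintype.sum_sum_type, Matrix.add_apply, Matrix.one_apply,
        Matrix.smul_apply, Finset.sum_ite_eq, ite_mul, smul_eq_mul]
      ring
    | inr i =>
      convert hv s i j using 1
      · rfl
      simp only [Matrix.of_apply]
      simp [two_smul, Matrix.mul_apply, Fintype.sum_sum_type, Matrix.sub_apply, Matrix.neg_apply,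
        Matrix.add_apply, Matrix.transpose_apply, Finset.sum_add_distrib,
        Finset.sum_mul, add_mul, neg_mul, Finset.sum_neg_distrib]
      ring
  classical
  set A : ℝ → ℝ := fun s => ∫ t in (0:ℝ)..s, α t with hAdef
  have hA : ∀ s, HasDerivAt A (α s) s := fun s => (hα.integral_hasStrictDerivAt 0 s).hasDerivAt
  have hAnn : ∀ s : ℝ, 0 ≤ s → 0 ≤ A s := fun s hs =>
    intervalIntegral.integral_nonneg hs (fun t _ => hαnn t)
  have hAmono : ∀ x s : ℝ, 0 ≤ x → x ≤ s → A x ≤ A s := by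
    intro x s hx hxs
    have h1 := intervalIntegral.integral_add_adjacent_intervals (μ := MeasureTheory.volume)
      (hα.intervalIntegrable 0 x) (hα.intervalIntegrable x s)
    have h2 : 0 ≤ ∫ t in x..s, α t :=
      intervalIntegral.integral_nonneg hxs (fun t _ => hαnn t)
    simp only [hAdef]
    linarith [h1, h2]
  -- uniform bound on entries of H, F on [0,1]
  obtain ⟨K₀, hK₀nn, hK₀⟩ : ∃ K₀ : ℝ, 0 ≤ K₀ ∧ ∀ s ∈ Set.Icc (0:ℝ) 1, ∀ i j,
      |H s i j| ≤ K₀ ∧ |F s i j| ≤ K₀ := by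
    set Φ : ℝ → ((Fin d → Fin d → ℝ) × (Fin d → Fin d → ℝ)) :=
      fun s => (fun i j => H s i j, fun i j => F s i j) with hΦ
    have hΦc : ContinuousOn Φ (Set.Icc (0:ℝ) 1) := by
      refine Continuous.continuousOn ?_
      exact ((continuous_pi fun i => continuous_pi fun j => hH i j).prodMk
        (continuous_pi fun i => continuous_pi fun j => hF i j))
    obtain ⟨C, hC⟩ := (isCompact_Icc).exists_bound_of_continuousOn hΦc
    refine ⟨max C 0, le_max_right _ _, ?_⟩
    intro s hs i j
    have h1 := hC s hs
    constructor
    · calc |H s i j| = ‖(Φ s).1 i j‖ := (Real.norm_eq_abs _).symm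
        _ ≤ ‖(Φ s).1 i‖ := norm_le_pi_norm _ j
        _ ≤ ‖(Φ s).1‖ := norm_le_pi_norm _ i
        _ ≤ ‖Φ s‖ := norm_fst_le _
        _ ≤ C := h1
        _ ≤ max C 0 := le_max_left _ _
    · calc |F s i j| = ‖(Φ s).2 i j‖ := (Real.norm_eq_abs _).symm
        _ ≤ ‖(Φ s).2 i‖ := norm_le_pi_norm _ j
        _ ≤ ‖(Φ s).2‖ := norm_le_pi_norm _ i
        _ ≤ ‖Φ s‖ := norm_snd_le _
        _ ≤ C := h1
        _ ≤ max C 0 := le_max_left _ _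
  set K : ℝ := 1 + 3 * d * K₀ with hK
  have hKpos : 0 < K := by positivity
  -- δ from det continuity
  obtain ⟨δ, hδpos, hδ⟩ : ∃ δ > (0:ℝ), ∀ B : Matrix (Fin d) (Fin d) ℝ,
      (∀ i j, |B i j| ≤ δ) → 1/2 < (1 + B).det := by
    have hcont : Continuous fun B : Fin d → Fin d → ℝ =>
        ((1 : Matrix (Fin d) (Fin d) ℝ) + Matrix.of B).det := by
      refine Continuous.matrix_det ?_
      exact continuous_const.add (continuous_matrix fun i j =>
        (continuous_apply j).comp (continuous_apply i))
    have hc0 : ContinuousAt (fun B : Fin d → Fin d → ℝ =>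
        ((1 : Matrix (Fin d) (Fin d) ℝ) + Matrix.of B).det) 0 := hcont.continuousAt
    rw [Metric.continuousAt_iff] at hc0
    obtain ⟨δ, hδpos, hδ⟩ := hc0 (1/2) (by norm_num)
    refine ⟨δ/2, by positivity, ?_⟩
    intro B hB
    have hdist : dist (fun i j => B i j) (0 : Fin d → Fin d → ℝ) < δ := by
      rw [dist_zero_right]
      refine lt_of_le_of_lt ?_ (half_lt_self hδpos)
      rw [pi_norm_le_iff_of_nonneg (by positivity)]
      intro i
      rw [pi_norm_le_iff_of_nonneg (by positivity)]
      intro j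
      rw [Real.norm_eq_abs]
      exact hB i j
    have h2 := hδ hdist
    have h3 : ((1 : Matrix (Fin d) (Fin d) ℝ) + Matrix.of (0 : Fin d → Fin d → ℝ)).det = 1 := by
      simp
    have h4 : ((1 : Matrix (Fin d) (Fin d) ℝ) + Matrix.of (fun i j => B i j)).det
        = (1 + B).det := rfl
    rw [Real.dist_eq, h3, h4] at h2
    have := abs_sub_lt_iff.1 h2
    linarith [this.2]
  -- choice of ε₀
  have hlogpos : 0 < Real.log (1 + δ) := Real.log_pos (by linarith)
  set ε₀ : ℝ := min 1 (Real.log (1 + δ) / K) with hε₀def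
  have hε₀pos : 0 < ε₀ := lt_min one_pos (by positivity)
  refine ⟨ε₀, hε₀pos, ?_⟩
  intro s hs
  obtain ⟨hs0, hsε⟩ := hs
  have hs1 : s ≤ 1 := le_of_lt (lt_of_lt_of_le hsε (min_le_left _ _))
  have hAs : 0 < A s := intervalIntegral.intervalIntegral_pos_of_pos_on
    (hα.intervalIntegrable 0 s) (fun x hx => hαpos x hx.1) hs0
  -- setup ODE quantities
  set e : (Fin d ⊕ Fin d) → Fin d → ℝ :=
    Sum.elim (fun i j => if i = j then (1:ℝ) else 0) (fun _ _ => 0) with he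
  set g : ℝ → ((Fin d ⊕ Fin d) → Fin d → ℝ) :=
    fun x => (Sum.elim (u x) (v x) : (Fin d ⊕ Fin d) → Fin d → ℝ) - A x • e with hg
  set g' : ℝ → ((Fin d ⊕ Fin d) → Fin d → ℝ) :=
    fun x => Sum.elim (fun i j => (v x + H x * u x) i j)
      (fun i j => (-(2 • (F x * u x)) - (H x)ᵀ * v x) i j) with hg'def
  have hgd : ∀ x, HasDerivAt g (g' x) x := by
    intro x
    rw [hasDerivAt_pi]
    intro i
    rw [hasDerivAt_pi]
    intro j
    cases i with
    | inl i =>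
      have h : HasDerivAt (fun x => u x i j - A x * e (Sum.inl i) j)
          ((v x + H x * u x + α x • (1 : Matrix (Fin d) (Fin d) ℝ)) i j
            - α x * e (Sum.inl i) j) x :=
        (hu x i j).sub ((hA x).mul_const _)
      refine h.congr_deriv ?_
      simp [hg'def, he, Matrix.add_apply, Matrix.smul_apply, Matrix.one_apply, smul_eq_mul]
    | inr i =>
      have h : HasDerivAt (fun x => v x i j - A x * e (Sum.inr i) j)
          ((-(2 • (F x * u x)) - (H x)ᵀ * v x) i j - α x * e (Sum.inr i) j) x :=
        (hv x i j).sub ((hA x).mul_const _)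
      refine h.congr_deriv ?_
      simp [hg'def, he]
  have hgc : Continuous g := continuous_iff_continuousAt.2 fun x => (hgd x).continuousAt
  have hA0 : A 0 = 0 := intervalIntegral.integral_same
  have hg0 : g 0 = 0 := by
    funext i j
    cases i with
    | inl i => simp [hg, hA0, hu0]
    | inr i => simp [hg, hA0, hv0]
  have entry_le : ∀ (w : (Fin d ⊕ Fin d) → Fin d → ℝ) (i : Fin d ⊕ Fin d) (j : Fin d),
      |w i j| ≤ ‖w‖ := by
    intro w i j
    calc |w i j| = ‖w i j‖ := (Real.norm_eq_abs _).symm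
      _ ≤ ‖w i‖ := norm_le_pi_norm _ j
      _ ≤ ‖w‖ := norm_le_pi_norm _ i
  -- Gronwall bound hypothesis
  have hbound : ∀ x ∈ Set.Ico (0:ℝ) s, ‖g' x‖ ≤ K * ‖g x‖ + K * A s := by
    intro x hx
    have hx01 : x ∈ Set.Icc (0:ℝ) 1 := ⟨hx.1, le_trans hx.2.le hs1⟩
    set W := ‖g x‖ + A s with hW
    have hWnn : 0 ≤ W := add_nonneg (norm_nonneg _) (hAnn s hs0.le)
    have hxb : ∀ (i : Fin d ⊕ Fin d) (j : Fin d),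
        |Sum.elim (u x) (v x) i j| ≤ W := by
      intro i j
      have h1 : (Sum.elim (u x) (v x) : (Fin d ⊕ Fin d) → Fin d → ℝ) i j
          = g x i j + A x * e i j := by
        simp [hg]
      rw [h1]
      have h2 := entry_le (g x) i j
      have he1 : |e i j| ≤ 1 := by
        cases i <;> simp [he] <;> split <;> norm_num
      have h3 : |A x * e i j| ≤ A s := by
        rw [abs_mul, abs_of_nonneg (hAnn x hx.1)]
        calc A x * |e i j| ≤ A x * 1 :=
              mul_le_mul_of_nonneg_left he1 (hAnn x hx.1)
          _ = A x := mul_one _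
          _ ≤ A s := hAmono x s hx.1 hx.2.le
      calc |g x i j + A x * e i j| ≤ |g x i j| + |A x * e i j| := abs_add_le _ _
        _ ≤ ‖g x‖ + A s := add_le_add h2 h3
    have hub : ∀ i j, |u x i j| ≤ W := fun i j => hxb (Sum.inl i) j
    have hvb : ∀ i j, |v x i j| ≤ W := fun i j => hxb (Sum.inr i) j
    have hsumH : ∀ i j, |∑ k, H x i k * u x k j| ≤ d * (K₀ * W) := by
      intro i j
      calc |∑ k, H x i k * u x k j| ≤ ∑ k, |H x i k * u x k j| :=
            Finset.abs_sum_le_sum_abs _ _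
        _ ≤ ∑ _k : Fin d, K₀ * W := Finset.sum_le_sum (fun k _ => by
            rw [abs_mul]
            exact mul_le_mul (hK₀ x hx01 i k).1 (hub k j) (abs_nonneg _) hK₀nn)
        _ = d * (K₀ * W) := by
            simp [Finset.sum_const, Finset.card_univ, nsmul_eq_mul]
    have hsumF : ∀ i j, |∑ k, F x i k * u x k j| ≤ d * (K₀ * W) := by
      intro i j
      calc |∑ k, F x i k * u x k j| ≤ ∑ k, |F x i k * u x k j| :=
            Finset.abs_sum_le_sum_abs _ _
        _ ≤ ∑ _k : Fin d, K₀ * W := Finset.sum_le_sum (fun k _ => by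
            rw [abs_mul]
            exact mul_le_mul (hK₀ x hx01 i k).2 (hub k j) (abs_nonneg _) hK₀nn)
        _ = d * (K₀ * W) := by
            simp [Finset.sum_const, Finset.card_univ, nsmul_eq_mul]
    have hsumHt : ∀ i j, |∑ k, H x k i * v x k j| ≤ d * (K₀ * W) := by
      intro i j
      calc |∑ k, H x k i * v x k j| ≤ ∑ k, |H x k i * v x k j| :=
            Finset.abs_sum_le_sum_abs _ _
        _ ≤ ∑ _k : Fin d, K₀ * W := Finset.sum_le_sum (fun k _ => by
            rw [abs_mul]
            exact mul_le_mul (hK₀ x hx01 k i).1 (hvb k j) (abs_nonneg _) hK₀nn)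
        _ = d * (K₀ * W) := by
            simp [Finset.sum_const, Finset.card_univ, nsmul_eq_mul]
    have hRHS : K * ‖g x‖ + K * A s = K * W := by rw [hW]; ring
    rw [hRHS]
    rw [pi_norm_le_iff_of_nonneg (by positivity)]
    intro i
    rw [pi_norm_le_iff_of_nonneg (by positivity)]
    intro j
    rw [Real.norm_eq_abs]
    have hdKW : 0 ≤ (d:ℝ) * (K₀ * W) := by positivity
    cases i with
    | inl i =>
      have heq : g' x (Sum.inl i) j = v x i j + ∑ k, H x i k * u x k j := by
        simp [hg'def, Matrix.add_apply, Matrix.mul_apply]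
      rw [heq]
      calc |v x i j + ∑ k, H x i k * u x k j|
          ≤ |v x i j| + |∑ k, H x i k * u x k j| := abs_add_le _ _
        _ ≤ W + d * (K₀ * W) := add_le_add (hvb i j) (hsumH i j)
        _ ≤ K * W := by rw [hK]; nlinarith [hWnn, hdKW]
    | inr i =>
      have heq : g' x (Sum.inr i) j
          = -(2 * ∑ k, F x i k * u x k j) - ∑ k, H x k i * v x k j := by
        simp [hg'def, two_smul, Matrix.sub_apply, Matrix.neg_apply, Matrix.add_apply,
          Matrix.mul_apply, Matrix.transpose_apply, Finset.sum_add_distrib]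
        ring
      rw [heq]
      calc |(-(2 * ∑ k, F x i k * u x k j) - ∑ k, H x k i * v x k j)|
          ≤ |2 * ∑ k, F x i k * u x k j| + |∑ k, H x k i * v x k j| := by
            rw [sub_eq_add_neg]
            refine le_trans (abs_add_le _ _) ?_
            rw [abs_neg, abs_neg]
        _ ≤ 2 * (d * (K₀ * W)) + d * (K₀ * W) := by
            have := hsumF i j
            have h2 : |2 * ∑ k, F x i k * u x k j| = 2 * |∑ k, F x i k * u x k j| := by
              rw [abs_mul]; norm_num
            rw [h2]
            have := hsumHt i j
            nlinarith [hsumF i j, hsumHt i j]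
        _ ≤ K * W := by rw [hK]; nlinarith [hWnn, hdKW]
  -- apply Gronwall
  have hgron := norm_le_gronwallBound_of_norm_deriv_right_le
    (f := g) (f' := g') (δ := 0) (K := K) (ε := K * A s) (a := 0) (b := s)
    hgc.continuousOn (fun x _ => (hgd x).hasDerivWithinAt) (by rw [hg0]; simp) hbound
  have hgs := hgron s ⟨hs0.le, le_refl s⟩
  rw [gronwallBound_of_K_ne_0 hKpos.ne'] at hgs
  have hgs2 : ‖g s‖ ≤ A s * (Real.exp (K * s) - 1) := by
    have hKAs : K * A s / K = A s := by field_simp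
    simpa [hKAs, sub_zero, mul_comm] using hgs
  have hexp : Real.exp (K * s) - 1 ≤ δ := by
    have h1 : s ≤ Real.log (1 + δ) / K := le_of_lt (lt_of_lt_of_le hsε (min_le_right _ _))
    have h2 : K * s ≤ Real.log (1 + δ) := by
      calc K * s ≤ K * (Real.log (1 + δ) / K) := mul_le_mul_of_nonneg_left h1 hKpos.le
        _ = Real.log (1 + δ) := by field_simp
    have h3 : Real.exp (K * s) ≤ 1 + δ := by
      calc Real.exp (K * s) ≤ Real.exp (Real.log (1 + δ)) := Real.exp_le_exp.2 h2
        _ = 1 + δ := Real.exp_log (by linarith only [hδpos])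
    linarith only [h3]
  have hgs3 : ‖g s‖ ≤ A s * δ :=
    le_trans hgs2 (mul_le_mul_of_nonneg_left hexp hAs.le)
  -- conclude on det
  set B : Matrix (Fin d) (Fin d) ℝ := (A s)⁻¹ • (u s - A s • 1) with hB
  have hBent : ∀ i j, |B i j| ≤ δ := by
    intro i j
    have hgsij : g s (Sum.inl i) j
        = u s i j - A s * (if i = j then (1:ℝ) else 0) := by
      simp [hg, he]
    have h1 : B i j = (A s)⁻¹ * g s (Sum.inl i) j := by
      simp [hB, Matrix.smul_apply, Matrix.sub_apply, Matrix.one_apply, hgsij, smul_eq_mul]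
    rw [h1, abs_mul, abs_inv, abs_of_pos hAs]
    have h2 := le_trans (entry_le (g s) (Sum.inl i) j) hgs3
    calc (A s)⁻¹ * |g s (Sum.inl i) j| ≤ (A s)⁻¹ * (A s * δ) :=
          mul_le_mul_of_nonneg_left h2 (inv_nonneg.2 hAs.le)
      _ = δ := by field_simp
  have hdet1 : 1/2 < (1 + B).det := hδ B hBent
  have husB : u s = A s • (1 + B) := by
    rw [hB, smul_add, smul_smul, mul_inv_cancel₀ hAs.ne', one_smul]
    abel
  have hdet : (u s).det = (A s)^d * (1 + B).det := by
    rw [husB, Matrix.det_smul]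
    simp [Fintype.card_fin]
  constructor
  · have : 0 < (1/2 : ℝ) * A s := by linarith
    exact pow_pos this d
  · rw [hdet]
    have h1 : ((1:ℝ)/2)^d ≤ 1/2 := by
      calc ((1:ℝ)/2)^d ≤ ((1:ℝ)/2)^1 := pow_le_pow_of_le_one (by norm_num) (by norm_num) hd
        _ = 1/2 := pow_one _
    calc ((1:ℝ)/2 * A s)^d = (1/2)^d * (A s)^d := mul_pow _ _ _
      _ ≤ 1/2 * (A s)^d := mul_le_mul_of_nonneg_right h1 (pow_nonneg hAs.le d)
      _ < (1 + B).det * (A s)^d := mul_lt_mul_of_pos_right hdet1 (pow_pos hAs d)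
      _ = (A s)^d * (1 + B).det := mul_comm _ _
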